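/- arXiv:1901.01720 — 2 statements merged into one kernel-verified Lean document; each statement's English description precedes it below -/
import Mathlib

section
/- Let F be ℝ or ℂ and let m, n be positive integers. Let φ : M_{mn}(F) → M_{mn}(F) be the linear map φ(M) = M + Σ_{j=1}^r (A_j ⊗ C_j) M (B_j ⊗ D_j), where A_j, B_j ∈ M_m(F) and C_j, D_j ∈ M_n(F). Then tr(φ(A ⊕ B)) = tr(A ⊕ B) for all A ∈ M_m(F) and B ∈ M_n(F) if and only if tr₁(φ(I_{mn}) − I_{mn}) = Σ_{j=1}^r tr(A_jB_j)·[C_j, D_j]₊ and tr₂(φ(I_{mn}) − I_{mn}) = Σ_{j=1}^r tr(C_jD_j)·[A_j, B_j]₊, where [X,Y]₊ = XY + YX is the anti-commutator. -/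
open Matrix Kronecker BigOperators

/-- The Kronecker sum `A ⊕ B = A ⊗ Iₙ + Iₘ ⊗ B`. -/
def kronSum {F : Type*} [CommRing F] {m n : ℕ}
    (A : Matrix (Fin m) (Fin m) F) (B : Matrix (Fin n) (Fin n) F) :
    Matrix (Fin m × Fin n) (Fin m × Fin n) F :=
  A ⊗ₖ (1 : Matrix (Fin n) (Fin n) F) + (1 : Matrix (Fin m) (Fin m) F) ⊗ₖ B

/-- The first partial trace `tr₁(P) = Σⱼ Pⱼⱼ` (sum of the diagonal blocks). -/
def ptrace1 {F : Type*} [AddCommMonoid F] {m n : ℕ}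
    (P : Matrix (Fin m × Fin n) (Fin m × Fin n) F) :
    Matrix (Fin n) (Fin n) F :=
  Matrix.of fun a b => ∑ k : Fin m, P (k, a) (k, b)

/-- The second partial trace `tr₂(P) = Σ_{k,l} tr(P_{kl}) E_{kl}` (blockwise trace). -/
def ptrace2 {F : Type*} [AddCommMonoid F] {m n : ℕ}
    (P : Matrix (Fin m × Fin n) (Fin m × Fin n) F) :
    Matrix (Fin m) (Fin m) F :=
  Matrix.of fun k l => ∑ a : Fin n, P (k, a) (l, a)

lemma trace_mul_all_zero {F : Type*} [RCLike F] {k : ℕ} (M : Matrix (Fin k) (Fin k) F)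
    (h : ∀ X, (X * M).trace = 0) : M = 0 := by
  ext i j
  have := h (single j i 1)
  simpa [Matrix.trace, Matrix.diag, Matrix.mul_apply, Matrix.single, ite_and] using this

lemma ptrace1_kron {F : Type*} [CommRing F] {m n : ℕ}
    (A : Matrix (Fin m) (Fin m) F) (B : Matrix (Fin n) (Fin n) F) :
    ptrace1 (A ⊗ₖ B) = A.trace • B := by
  ext a b
  simp [ptrace1, Matrix.trace, Matrix.diag, Finset.sum_mul]

lemma ptrace2_kron {F : Type*} [CommRing F] {m n : ℕ}
    (A : Matrix (Fin m) (Fin m) F) (B : Matrix (Fin n) (Fin n) F) :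
    ptrace2 (A ⊗ₖ B) = B.trace • A := by
  ext a b
  simp [ptrace2, Matrix.trace, Matrix.diag, Finset.mul_sum, mul_comm]

lemma ptrace1_sum {F : Type*} [AddCommMonoid F] {m n r : ℕ}
    (P : Fin r → Matrix (Fin m × Fin n) (Fin m × Fin n) F) :
    ptrace1 (∑ j, P j) = ∑ j, ptrace1 (P j) := by
  ext a b
  simp [ptrace1, Matrix.sum_apply]
  exact Finset.sum_comm

lemma ptrace2_sum {F : Type*} [AddCommMonoid F] {m n r : ℕ}
    (P : Fin r → Matrix (Fin m × Fin n) (Fin m × Fin n) F) :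
    ptrace2 (∑ j, P j) = ∑ j, ptrace2 (P j) := by
  ext a b
  simp [ptrace2, Matrix.sum_apply]
  exact Finset.sum_comm

/-- Lemma 3.4: for `φ(M) = M + Σⱼ (Aⱼ ⊗ Cⱼ) M (Bⱼ ⊗ Dⱼ)`, the map `φ` preserves the
trace of all Kronecker sums iff
`tr₁(φ(I) − I) = Σⱼ tr(AⱼBⱼ)·[Cⱼ,Dⱼ]₊` and `tr₂(φ(I) − I) = Σⱼ tr(CⱼDⱼ)·[Aⱼ,Bⱼ]₊`,
where `[X,Y]₊ = XY + YX` is the anti-commutator. -/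
theorem trace_kronSum_preserved_iff_anticommutator
    {F : Type*} [RCLike F] {m n r : ℕ} (hm : 0 < m) (hn : 0 < n)
    (A B : Fin r → Matrix (Fin m) (Fin m) F)
    (C D : Fin r → Matrix (Fin n) (Fin n) F)
    (φ : Matrix (Fin m × Fin n) (Fin m × Fin n) F →
         Matrix (Fin m × Fin n) (Fin m × Fin n) F)
    (hφ : ∀ M, φ M = M + ∑ j : Fin r, (A j ⊗ₖ C j) * M * (B j ⊗ₖ D j)) :
    (∀ (X : Matrix (Fin m) (Fin m) F) (Y : Matrix (Fin n) (Fin n) F),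
        (φ (kronSum X Y)).trace = (kronSum X Y).trace) ↔
      (ptrace1 (φ 1 - 1) = ∑ j : Fin r, (A j * B j).trace • (C j * D j + D j * C j) ∧
       ptrace2 (φ 1 - 1) = ∑ j : Fin r, (C j * D j).trace • (A j * B j + B j * A j)) := by
  set S1 := ∑ j : Fin r, (C j * D j).trace • (B j * A j) with hS1
  set S2 := ∑ j : Fin r, (A j * B j).trace • (D j * C j) with hS2
  -- key identity
  have key : ∀ (X : Matrix (Fin m) (Fin m) F) (Y : Matrix (Fin n) (Fin n) F),
      (φ (kronSum X Y)).trace = (kronSum X Y).trace + ((X * S1).trace + (Y * S2).trace) := by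
    intro X Y
    rw [hφ, trace_add, trace_sum]
    congr 1
    have term : ∀ j, ((A j ⊗ₖ C j) * kronSum X Y * (B j ⊗ₖ D j)).trace
        = (C j * D j).trace * (X * (B j * A j)).trace
          + (A j * B j).trace * (Y * (D j * C j)).trace := by
      intro j
      have e : (A j ⊗ₖ C j) * kronSum X Y * (B j ⊗ₖ D j)
          = ((A j * X * B j) ⊗ₖ (C j * D j)) + ((A j * B j) ⊗ₖ (C j * Y * D j)) := by
        simp only [kronSum, mul_add, add_mul, ← Matrix.mul_kronecker_mul, mul_one, one_mul]
      rw [e, trace_add, trace_kronecker, trace_kronecker]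
      rw [show (A j * X * B j).trace = (X * (B j * A j)).trace by
            rw [← mul_assoc]; exact (trace_mul_cycle X (B j) (A j)).symm, mul_comm,
          show (C j * Y * D j).trace = (Y * (D j * C j)).trace by
            rw [← mul_assoc]; exact (trace_mul_cycle Y (D j) (C j)).symm]
    simp only [term, hS1, hS2, Matrix.mul_sum, trace_sum, Matrix.mul_smul,
      trace_smul, smul_eq_mul, Finset.sum_add_distrib]
  -- compute φ 1 - 1
  have hphi1 : φ 1 - 1 = ∑ j : Fin r, (A j * B j) ⊗ₖ (C j * D j) := by
    rw [hφ]
    simp [← Matrix.mul_kronecker_mul]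
  have hpt1 : ptrace1 (φ 1 - 1) = ∑ j : Fin r, (A j * B j).trace • (C j * D j) := by
    rw [hphi1, ptrace1_sum]
    exact Finset.sum_congr rfl fun j _ => ptrace1_kron _ _
  have hpt2 : ptrace2 (φ 1 - 1) = ∑ j : Fin r, (C j * D j).trace • (A j * B j) := by
    rw [hphi1, ptrace2_sum]
    exact Finset.sum_congr rfl fun j _ => ptrace2_kron _ _
  constructor
  · intro h
    have hS1z : S1 = 0 := by
      apply trace_mul_all_zero
      intro X
      have := key X 0
      rw [h X 0] at this
      simpa using this.symm
    have hS2z : S2 = 0 := by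
      apply trace_mul_all_zero
      intro Y
      have := key 0 Y
      rw [h 0 Y] at this
      simpa using this.symm
    constructor
    · rw [hpt1]
      simp only [smul_add, Finset.sum_add_distrib, ← hS2, hS2z, add_zero]
    · rw [hpt2]
      simp only [smul_add, Finset.sum_add_distrib, ← hS1, hS1z, add_zero]
  · rintro ⟨h1, h2⟩
    rw [hpt1] at h1
    rw [hpt2] at h2
    have hS2z : S2 = 0 := by
      have := h1
      rw [show ∑ j : Fin r, (A j * B j).trace • (C j * D j + D j * C j)
          = (∑ j : Fin r, (A j * B j).trace • (C j * D j)) + S2 by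
        simp only [smul_add, Finset.sum_add_distrib, hS2]] at this
      exact (add_eq_left.mp this.symm)
    have hS1z : S1 = 0 := by
      have := h2
      rw [show ∑ j : Fin r, (C j * D j).trace • (A j * B j + B j * A j)
          = (∑ j : Fin r, (C j * D j).trace • (A j * B j)) + S1 by
        simp only [smul_add, Finset.sum_add_distrib, hS1]] at this
      exact (add_eq_left.mp this.symm)
    intro X Y
    rw [key X Y, hS1z, hS2z]
    simp
end

section
/- Let m, n be positive integers. Let φ : M_{mn}(ℂ) → M_{mn}(ℂ) be a linear skew RT-Hermitian map, i.e. tr(φ(A)·B) equals the negative of the complex conjugate of tr(φ(B̄)·Ā) for all A, B ∈ M_{mn}(ℂ), where X̄ denotes entrywise complex conjugation. Then tr(φ(A ⊕ B)) = tr(A ⊕ B) for all A ∈ M_m(ℂ) and B ∈ M_n(ℂ) if and only if tr₁(φ(I_{mn})) = −m·I_n and tr₂(φ(I_{mn})) = −n·I_m. -/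
open Matrix Kronecker BigOperators

section Aux

variable {m n : ℕ}

private lemma trace_mul_std {N : ℕ} (M : Matrix (Fin N) (Fin N) ℂ) (k l : Fin N) :
    (M * Matrix.single k l (1:ℂ)).trace = M l k := by
  rw [Matrix.trace]
  simp only [diag_apply, Matrix.mul_apply, Matrix.single, of_apply, mul_ite, mul_one, mul_zero,
    ite_and]
  rw [Finset.sum_eq_single l, Finset.sum_eq_single k] <;> simp +contextual [eq_comm]

private lemma std_map_conj {N : ℕ} (k l : Fin N) :
    (Matrix.single k l (1:ℂ)).map (starRingEnd ℂ) = Matrix.single k l 1 := by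
  ext a b
  simp [Matrix.single, Matrix.map_apply, apply_ite (starRingEnd ℂ)]

private lemma trace_map_conj {N : ℕ} (X : Matrix (Fin N) (Fin N) ℂ) :
    (X.map (starRingEnd ℂ)).trace = (starRingEnd ℂ) X.trace := by
  simp [Matrix.trace, Matrix.map_apply, map_sum]

private lemma trace_mul_kron_right (P : Matrix (Fin m × Fin n) (Fin m × Fin n) ℂ)
    (X : Matrix (Fin m) (Fin m) ℂ) :
    (P * (X ⊗ₖ (1 : Matrix (Fin n) (Fin n) ℂ))).trace = (ptrace2 P * X).trace := by
  simp only [Matrix.trace, diag_apply, Matrix.mul_apply, ptrace2, of_apply,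
    kroneckerMap_apply, Matrix.one_apply, mul_ite, mul_one, mul_zero,
    Fintype.sum_prod_type, Finset.sum_mul, Finset.sum_ite_eq', Finset.mem_univ, if_true]
  exact Finset.sum_congr rfl fun _ _ => Finset.sum_comm

private lemma trace_mul_kron_left (P : Matrix (Fin m × Fin n) (Fin m × Fin n) ℂ)
    (Y : Matrix (Fin n) (Fin n) ℂ) :
    (P * ((1 : Matrix (Fin m) (Fin m) ℂ) ⊗ₖ Y)).trace = (ptrace1 P * Y).trace := by
  simp only [Matrix.trace, diag_apply, Matrix.mul_apply, ptrace1, of_apply,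
    kroneckerMap_apply, Matrix.one_apply, ite_mul, one_mul, zero_mul, mul_ite, mul_zero,
    Fintype.sum_prod_type, Finset.sum_mul, Finset.sum_ite_irrel, Finset.sum_const_zero,
    Finset.sum_ite_eq', Finset.mem_univ, if_true]
  rw [Finset.sum_comm]
  exact Finset.sum_congr rfl fun _ _ => Finset.sum_comm

private lemma kronSum_map_conj (X : Matrix (Fin m) (Fin m) ℂ) (Y : Matrix (Fin n) (Fin n) ℂ) :
    (kronSum X Y).map (starRingEnd ℂ)
      = kronSum (X.map (starRingEnd ℂ)) (Y.map (starRingEnd ℂ)) := by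
  ext ⟨k, a⟩ ⟨l, b⟩
  simp [kronSum, kroneckerMap_apply, Matrix.map_apply, Matrix.one_apply,
    apply_ite (starRingEnd ℂ)]

end Aux

/-- A skew RT-Hermitian linear map `φ` on complex matrices (i.e.
`tr(φ(A)B) = −conj(tr(φ(B̄)Ā))` for all `A, B`, where `X̄` is entrywise conjugation)
preserves the trace of all Kronecker sums iff
`tr₁(φ(I)) = −m·Iₙ` and `tr₂(φ(I)) = −n·Iₘ`. -/
theorem trace_kronSum_preserved_iff_of_skew_rt_hermitian
    {m n : ℕ} (hm : 0 < m) (hn : 0 < n)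
    (φ : Matrix (Fin m × Fin n) (Fin m × Fin n) ℂ →ₗ[ℂ]
         Matrix (Fin m × Fin n) (Fin m × Fin n) ℂ)
    (hherm : ∀ A B : Matrix (Fin m × Fin n) (Fin m × Fin n) ℂ,
        (φ A * B).trace =
          -((starRingEnd ℂ)
            ((φ (B.map (starRingEnd ℂ)) * A.map (starRingEnd ℂ)).trace))) :
    (∀ (X : Matrix (Fin m) (Fin m) ℂ) (Y : Matrix (Fin n) (Fin n) ℂ),
        (φ (kronSum X Y)).trace = (kronSum X Y).trace) ↔
      (ptrace1 (φ 1) = -((m : ℂ) • (1 : Matrix (Fin n) (Fin n) ℂ)) ∧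
       ptrace2 (φ 1) = -((n : ℂ) • (1 : Matrix (Fin m) (Fin m) ℂ))) := by
  have hone : ((1 : Matrix (Fin m × Fin n) (Fin m × Fin n) ℂ)).map (starRingEnd ℂ) = 1 :=
    Matrix.map_one _ (map_zero _) (map_one _)
  -- key trace identity
  have htr : ∀ Z : Matrix (Fin m × Fin n) (Fin m × Fin n) ℂ,
      (φ Z).trace = -((starRingEnd ℂ) ((φ 1 * Z.map (starRingEnd ℂ)).trace)) := by
    intro Z
    have := hherm Z 1
    rwa [mul_one, hone] at this
  -- key formula for trace of φ on a Kronecker sum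
  have key : ∀ (X : Matrix (Fin m) (Fin m) ℂ) (Y : Matrix (Fin n) (Fin n) ℂ),
      (φ (kronSum X Y)).trace =
        -((starRingEnd ℂ) ((ptrace2 (φ 1) * X.map (starRingEnd ℂ)).trace
          + (ptrace1 (φ 1) * Y.map (starRingEnd ℂ)).trace)) := by
    intro X Y
    rw [htr, kronSum_map_conj]
    unfold kronSum
    rw [mul_add, Matrix.trace_add, trace_mul_kron_right, trace_mul_kron_left]
  have htrKS : ∀ (X : Matrix (Fin m) (Fin m) ℂ) (Y : Matrix (Fin n) (Fin n) ℂ),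
      (kronSum X Y).trace = (n : ℂ) * X.trace + (m : ℂ) * Y.trace := by
    intro X Y
    simp [kronSum, Matrix.trace_kronecker, Matrix.trace_one, mul_comm]
  constructor
  · intro h
    constructor
    · ext a b
      have := (key 0 (Matrix.single b a 1)).symm.trans
        ((h 0 (Matrix.single b a 1)).trans (htrKS 0 (Matrix.single b a 1)))
      rw [std_map_conj, trace_mul_std] at this
      simp only [Matrix.map_zero, Matrix.mul_zero, Matrix.trace_zero, zero_add,
        Matrix.trace_zero, mul_zero] at this
      have h2 : ptrace1 (φ 1) a b
          = -((m : ℂ) * (starRingEnd ℂ) (Matrix.single b a (1:ℂ)).trace) := by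
        have := congrArg (fun z => -(starRingEnd ℂ) z) this
        simpa using this
      rw [← one_mul (Matrix.single b a (1:ℂ)), trace_mul_std] at h2
      simp only [Matrix.one_apply] at h2
      rw [h2]
      by_cases hab : a = b <;>
        simp [hab, Matrix.one_apply, Matrix.neg_apply, Matrix.smul_apply]
    · ext k l
      have := (key (Matrix.single l k 1) 0).symm.trans
        ((h (Matrix.single l k 1) 0).trans (htrKS (Matrix.single l k 1) 0))
      rw [std_map_conj, trace_mul_std] at this
      simp only [Matrix.map_zero, Matrix.mul_zero, Matrix.trace_zero, add_zero,
        mul_zero] at this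
      have h2 : ptrace2 (φ 1) k l
          = -((n : ℂ) * (starRingEnd ℂ) (Matrix.single l k (1:ℂ)).trace) := by
        have := congrArg (fun z => -(starRingEnd ℂ) z) this
        simpa using this
      rw [← one_mul (Matrix.single l k (1:ℂ)), trace_mul_std] at h2
      simp only [Matrix.one_apply] at h2
      rw [h2]
      by_cases hkl : k = l <;>
        simp [hkl, Matrix.one_apply, Matrix.neg_apply, Matrix.smul_apply]
  · rintro ⟨h1, h2⟩ X Y
    rw [key, htrKS, h1, h2]
    rw [Matrix.neg_mul, Matrix.smul_mul, Matrix.trace_neg, Matrix.trace_smul,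
      Matrix.neg_mul, Matrix.smul_mul, Matrix.trace_neg, Matrix.trace_smul,
      Matrix.one_mul, Matrix.one_mul, trace_map_conj, trace_map_conj]
    simp only [smul_eq_mul, map_add, map_neg, _root_.map_mul, Complex.conj_conj, map_natCast]
    ring
end
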